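/- Let H be a real Hilbert space, K a nonempty convex subset of H, g : H → H a map whose range contains K (for every x ∈ K there exists w ∈ H with g w = x), μ > 0, and F : H → ℝ Fréchet differentiable. Then F is strongly exponentially general convex with respect to g, i.e. exp(F(g u + t·(g v − g u))) ≤ (1−t)·exp(F(g u)) + t·exp(F(g v)) − μ·t·(1−t)·‖g v − g u‖² for all u, v with g u, g v ∈ K and all t ∈ [0,1], if and only if exp(F(g v)) − exp(F(g u)) ≥ ⟨exp(F(g u))·∇F(g u), g v − g u⟩ + μ·‖g v − g u‖² for all u, v ∈ H with g u, g v ∈ K. -/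

import Mathlib

open scoped RealInnerProductSpace
open Filter Topology

theorem stmt_16 {H : Type*} [NormedAddCommGroup H] [InnerProductSpace ℝ H] [CompleteSpace H]
    (K : Set H) (hK : K.Nonempty) (hKconv : Convex ℝ K)
    (g : H → H) (hg : ∀ x ∈ K, ∃ w : H, g w = x)
    (μ : ℝ) (hμ : 0 < μ)
    (F : H → ℝ) (F' : H → H) (hF : ∀ x : H, HasGradientAt F (F' x) x) :
    (∀ u v : H, g u ∈ K → g v ∈ K → ∀ t ∈ Set.Icc (0 : ℝ) 1,
        Real.exp (F (g u + t • (g v - g u))) ≤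
          (1 - t) * Real.exp (F (g u)) + t * Real.exp (F (g v))
            - μ * (t * (1 - t)) * ‖g v - g u‖ ^ 2) ↔
      ∀ u v : H, g u ∈ K → g v ∈ K →
        ⟪Real.exp (F (g u)) • F' (g u), g v - g u⟫ + μ * ‖g v - g u‖ ^ 2 ≤
          Real.exp (F (g v)) - Real.exp (F (g u)) := by
  constructor
  · intro h u v hu hv
    set d := g v - g u with hd
    have hline : HasDerivAt (fun t : ℝ => g u + t • d) d 0 := by
      simpa using ((hasDerivAt_id (0 : ℝ)).smul_const d).const_add (g u)
    have hFd : HasFDerivAt (fun x => Real.exp (F x))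
        (Real.exp (F (g u)) • ((InnerProductSpace.toDual ℝ H) (F' (g u)) : H →L[ℝ] ℝ))
        ((fun t : ℝ => g u + t • d) 0) := by
      simpa using ((hF (g u)).hasFDerivAt).exp
    have hφ : HasDerivAt (fun t : ℝ => Real.exp (F (g u + t • d)))
        (Real.exp (F (g u)) * ⟪F' (g u), d⟫) 0 := by
      have := hFd.comp_hasDerivAt 0 hline
      simp [Function.comp, InnerProductSpace.toDual_apply_apply] at this
      exact this
    have hmem : Set.Ioc (0 : ℝ) 1 ∈ 𝓝[>] (0 : ℝ) :=
      Ioc_mem_nhdsGT_of_mem (by constructor <;> norm_num)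
    have hslope : Tendsto (fun t : ℝ => (Real.exp (F (g u + t • d)) - Real.exp (F (g u))) / t)
        (𝓝[>] (0 : ℝ)) (𝓝 (Real.exp (F (g u)) * ⟪F' (g u), d⟫)) := by
      have h1 := hasDerivAt_iff_tendsto_slope.mp hφ
      have h2 := h1.mono_left (nhdsWithin_mono _ (fun x hx => ne_of_gt hx))
      refine h2.congr (fun t => ?_)
      simp [slope_def_field]
    have hrhs : Tendsto (fun t : ℝ => Real.exp (F (g v)) - Real.exp (F (g u)) - μ * (1 - t) * ‖d‖ ^ 2)
        (𝓝[>] (0 : ℝ)) (𝓝 (Real.exp (F (g v)) - Real.exp (F (g u)) - μ * ‖d‖ ^ 2)) := by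
      have : Tendsto (fun t : ℝ => Real.exp (F (g v)) - Real.exp (F (g u)) - μ * (1 - t) * ‖d‖ ^ 2)
          (𝓝 (0 : ℝ)) (𝓝 (Real.exp (F (g v)) - Real.exp (F (g u)) - μ * (1 - (0:ℝ)) * ‖d‖ ^ 2)) :=
        Continuous.tendsto (by continuity) 0
      simpa using this.mono_left nhdsWithin_le_nhds
    have hev : ∀ᶠ t in 𝓝[>] (0 : ℝ),
        (Real.exp (F (g u + t • d)) - Real.exp (F (g u))) / t ≤
          Real.exp (F (g v)) - Real.exp (F (g u)) - μ * (1 - t) * ‖d‖ ^ 2 := by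
      filter_upwards [hmem] with t ht
      have hineq := h u v hu hv t ⟨le_of_lt ht.1, ht.2⟩
      rw [div_le_iff₀ ht.1]
      nlinarith [ht.1, hineq]
    have hfin := le_of_tendsto_of_tendsto hslope hrhs hev
    rw [real_inner_smul_left]
    linarith
  · intro h u v hu hv t ht
    obtain ⟨ht0, ht1⟩ := ht
    set d := g v - g u with hd
    set x := g u + t • d with hx
    have hxK : x ∈ K := by
      have := hKconv hu hv (by linarith : (0:ℝ) ≤ 1 - t) ht0 (by ring)
      have heq : (1 - t) • g u + t • g v = x := by rw [hx, hd]; module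
      rwa [heq] at this
    obtain ⟨w, hw⟩ := hg x hxK
    have h1 := h w u (hw ▸ hxK) hu
    have h2 := h w v (hw ▸ hxK) hv
    rw [hw] at h1 h2
    have e1 : g u - x = (-t) • d := by rw [hx]; module
    have e2 : g v - x = (1 - t) • d := by rw [hx, hd]; module
    rw [e1] at h1
    rw [e2] at h2
    rw [real_inner_smul_right] at h1 h2
    have n1 : ‖(-t) • d‖ ^ 2 = t ^ 2 * ‖d‖ ^ 2 := by
      rw [norm_smul, Real.norm_eq_abs, mul_pow, sq_abs]; ring
    have n2 : ‖(1 - t) • d‖ ^ 2 = (1 - t) ^ 2 * ‖d‖ ^ 2 := by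
      rw [norm_smul, Real.norm_eq_abs, mul_pow, sq_abs]
    rw [n1] at h1
    rw [n2] at h2
    nlinarith [mul_le_mul_of_nonneg_left h1 (by linarith : (0:ℝ) ≤ 1 - t),
      mul_le_mul_of_nonneg_left h2 ht0]
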